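/- Let G be a finite graph with independence number α, and W ⊆ V(G) with |W| = l. Suppose that for every subset W' ⊆ W and every maximum independent set Γ of the induced subgraph on W', at most M vertices of W' \ Γ have fewer than 3 neighbors in Γ, while every vertex of W' \ Γ has at least 1 neighbor in Γ. Then r(W) ≥ (3/2)·(l/α − 1)·l − 3l − 2M·(l/α). -/

import Mathlib

/-- The Johnson-type graph `G(n,r,s)`: vertices are the `r`-element subsets of
`{1,…,n}` (modeled as `Finset (Fin n)` of cardinality `r`), two distinct vertices
adjacent iff their intersection has size exactly `s`. -/
def johnson (n r s : ℕ) : SimpleGraph {A : Finset (Fin n) // A.card = r} where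
  Adj A B := A ≠ B ∧ (A.1 ∩ B.1).card = s
  symm := by
    constructor
    intro A B h
    exact ⟨h.1.symm, by rw [Finset.inter_comm]; exact h.2⟩
  loopless := by constructor; intro A h; exact h.1 rfl

instance (n r s : ℕ) : DecidableRel (johnson n r s).Adj := fun A B =>
  inferInstanceAs (Decidable (A ≠ B ∧ (A.1 ∩ B.1).card = s))

/-- `Γ` is an independent set of vertices in `G`. -/
def IsIndep {V : Type*} (G : SimpleGraph V) (Γ : Finset V) : Prop :=
  ∀ x ∈ Γ, ∀ y ∈ Γ, ¬ G.Adj x y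

/-- The number of edges of `G` with both endpoints in `W`. -/
def edgeCount {V : Type*} [DecidableEq V] (G : SimpleGraph V) [DecidableRel G.Adj]
    (W : Finset V) : ℕ :=
  ((W ×ˢ W).filter fun p => G.Adj p.1 p.2).card / 2

instance {V : Type*} (G : SimpleGraph V) [DecidableRel G.Adj] [DecidableEq V] (Γ : Finset V) :
    Decidable (IsIndep G Γ) :=
  inferInstanceAs (Decidable (∀ x ∈ Γ, ∀ y ∈ Γ, ¬ G.Adj x y))

lemma cardFilterProd {V : Type*} [DecidableEq V] (G : SimpleGraph V) [DecidableRel G.Adj]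
    (S T : Finset V) :
    ((S ×ˢ T).filter fun p => G.Adj p.1 p.2).card
      = ∑ x ∈ S, (T.filter fun y => G.Adj x y).card := by
  rw [Finset.card_filter, Finset.sum_product]
  exact Finset.sum_congr rfl fun x _ => (Finset.card_filter _ _).symm

lemma edgeCount_split {V : Type*} [DecidableEq V] (G : SimpleGraph V) [DecidableRel G.Adj]
    (W Γ : Finset V) (hΓW : Γ ⊆ W) (hind : IsIndep G Γ) :
    edgeCount G W = edgeCount G (W \ Γ)
      + ∑ w ∈ W \ Γ, (Γ.filter fun x => G.Adj x w).card := by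
  set D := W \ Γ with hDdef
  have hdisj : Disjoint Γ D := Finset.disjoint_sdiff
  have hWu : Γ ∪ D = W := Finset.union_sdiff_of_subset hΓW
  have hfe : ∀ x ∈ Γ, (Γ.filter fun y => G.Adj x y) = ∅ := by
    intro x hx
    refine Finset.filter_eq_empty_iff.2 ?_
    intro y hy
    exact hind x hx y hy
  have hsym : ∑ x ∈ D, (Γ.filter fun y => G.Adj x y).card
      = ∑ w ∈ D, (Γ.filter fun x => G.Adj x w).card := by
    refine Finset.sum_congr rfl fun x hx => ?_
    congr 1
    ext y
    simp [G.adj_comm]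
  have hcomm : ∑ x ∈ Γ, (D.filter fun y => G.Adj x y).card
      = ∑ w ∈ D, (Γ.filter fun x => G.Adj x w).card := by
    simp only [Finset.card_filter]
    exact Finset.sum_comm
  have h1 : ((W ×ˢ W).filter fun p => G.Adj p.1 p.2).card
      = ((D ×ˢ D).filter fun p => G.Adj p.1 p.2).card
        + 2 * ∑ w ∈ D, (Γ.filter fun x => G.Adj x w).card := by
    rw [cardFilterProd, cardFilterProd]
    have hin : ∀ x, (W.filter fun y => G.Adj x y).card
        = (Γ.filter fun y => G.Adj x y).card + (D.filter fun y => G.Adj x y).card := by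
      intro x
      rw [← hWu, Finset.filter_union,
        Finset.card_union_of_disjoint (Finset.disjoint_filter_filter hdisj)]
    calc ∑ x ∈ W, (W.filter fun y => G.Adj x y).card
        = ∑ x ∈ Γ, (W.filter fun y => G.Adj x y).card
          + ∑ x ∈ D, (W.filter fun y => G.Adj x y).card := by
          rw [← hWu, Finset.sum_union hdisj]
      _ = ∑ x ∈ Γ, (D.filter fun y => G.Adj x y).card
          + (∑ x ∈ D, (Γ.filter fun y => G.Adj x y).card
             + ∑ x ∈ D, (D.filter fun y => G.Adj x y).card) := by
          have e1 : ∑ x ∈ Γ, (W.filter fun y => G.Adj x y).card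
              = ∑ x ∈ Γ, (D.filter fun y => G.Adj x y).card :=
            Finset.sum_congr rfl fun x hx => by
              rw [hin x, hfe x hx, Finset.card_empty, Nat.zero_add]
          have e2 : ∑ x ∈ D, (W.filter fun y => G.Adj x y).card
              = ∑ x ∈ D, (Γ.filter fun y => G.Adj x y).card
                + ∑ x ∈ D, (D.filter fun y => G.Adj x y).card := by
            rw [← Finset.sum_add_distrib]
            exact Finset.sum_congr rfl fun x _ => hin x
          rw [e1, e2]
      _ = ∑ x ∈ D, (D.filter fun y => G.Adj x y).card
          + 2 * ∑ w ∈ D, (Γ.filter fun x => G.Adj x w).card := by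
          rw [hcomm, hsym]; ring
  unfold edgeCount
  rw [h1, Nat.add_mul_div_left _ _ (by norm_num : 0 < 2)]

lemma cross_bound {V : Type*} [DecidableEq V] (G : SimpleGraph V) [DecidableRel G.Adj]
    (Γ D : Finset V) (M : ℕ)
    (hbad : (D.filter fun w => (Γ.filter fun x => G.Adj x w).card < 3).card ≤ M)
    (hdeg : ∀ w ∈ D, 1 ≤ (Γ.filter fun x => G.Adj x w).card) :
    3 * D.card ≤ (∑ w ∈ D, (Γ.filter fun x => G.Adj x w).card) + 2 * M := by
  set d : V → ℕ := fun w => (Γ.filter fun x => G.Adj x w).card with hd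
  set B := D.filter fun w => d w < 3 with hB
  have hsplit : ∑ w ∈ B, d w + ∑ w ∈ D.filter (fun w => ¬ d w < 3), d w = ∑ w ∈ D, d w :=
    Finset.sum_filter_add_sum_filter_not D _ d
  have hcard : B.card + (D.filter fun w => ¬ d w < 3).card = D.card :=
    Finset.card_filter_add_card_filter_not _
  have h1 : B.card * 1 ≤ ∑ w ∈ B, d w :=
    Finset.card_nsmul_le_sum B d 1 fun w hw => hdeg w (Finset.mem_filter.1 hw).1
  have h2 : (D.filter fun w => ¬ d w < 3).card * 3 ≤ ∑ w ∈ D.filter (fun w => ¬ d w < 3), d w :=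
    Finset.card_nsmul_le_sum _ d 3 fun w hw => by
      have := (Finset.mem_filter.1 hw).2; omega
  have hrfl : D.sum d = ∑ w ∈ D, d w := rfl
  omega
theorem stmt16 {V : Type*} [Fintype V] [DecidableEq V] (G : SimpleGraph V)
    [DecidableRel G.Adj] (α M l : ℕ) (hα_pos : 0 < α)
    (hα_ex : ∃ Γ : Finset V, IsIndep G Γ ∧ Γ.card = α)
    (hα_max : ∀ Γ : Finset V, IsIndep G Γ → Γ.card ≤ α)
    (W : Finset V) (hW : W.card = l)
    (hM : ∀ W' ⊆ W, ∀ Γ ⊆ W', IsIndep G Γ →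
      (∀ Γ' ⊆ W', IsIndep G Γ' → Γ'.card ≤ Γ.card) →
      ((W' \ Γ).filter (fun w => (Γ.filter (fun x => G.Adj x w)).card < 3)).card ≤ M
        ∧ ∀ w ∈ W' \ Γ, 1 ≤ (Γ.filter (fun x => G.Adj x w)).card) :
    (3 / 2 : ℝ) * ((l : ℝ) / (α : ℝ) - 1) * l - 3 * l - 2 * M * ((l : ℝ) / (α : ℝ))
      ≤ (edgeCount G W : ℝ) := by
  have key : ∀ k : ℕ, ∀ W' ⊆ W,
      3 * (k : ℝ) * (W'.card : ℝ) - (3 / 2 : ℝ) * α * (k * (k + 1)) - 2 * M * k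
        ≤ (edgeCount G W' : ℝ) := by
    intro k
    induction k with
    | zero => intro W' _; simp
    | succ k ih =>
      intro W' hW'
      obtain ⟨Γ, hΓmem, hΓmax⟩ := Finset.exists_max_image
        (W'.powerset.filter fun Γ => IsIndep G Γ) Finset.card
        ⟨∅, Finset.mem_filter.2 ⟨Finset.empty_mem_powerset _, by simp [IsIndep]⟩⟩
      rw [Finset.mem_filter, Finset.mem_powerset] at hΓmem
      obtain ⟨hΓsub, hind⟩ := hΓmem
      obtain ⟨hbad, hdeg⟩ := hM W' hW' Γ hΓsub hind (fun Γ' hΓ' hind' =>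
        hΓmax Γ' (Finset.mem_filter.2 ⟨Finset.mem_powerset.2 hΓ', hind'⟩))
      have hΓα : Γ.card ≤ α := hα_max Γ hind
      have hsplit := edgeCount_split G W' Γ hΓsub hind
      have hC := cross_bound G Γ (W' \ Γ) M hbad hdeg
      have hIH := ih (W' \ Γ) ((Finset.sdiff_subset).trans hW')
      have hcard : (W' \ Γ).card = W'.card - Γ.card := Finset.card_sdiff_of_subset hΓsub
      have hΓle : Γ.card ≤ W'.card := Finset.card_le_card hΓsub
      have hcardR : ((W' \ Γ).card : ℝ) = (W'.card : ℝ) - Γ.card := by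
        rw [hcard, Nat.cast_sub hΓle]
      have hsplitR : (edgeCount G W' : ℝ)
          = (edgeCount G (W' \ Γ) : ℝ)
            + ((∑ w ∈ W' \ Γ, (Γ.filter fun x => G.Adj x w).card : ℕ) : ℝ) := by
        exact_mod_cast congrArg (Nat.cast : ℕ → ℝ) hsplit
      have hCR : 3 * ((W' \ Γ).card : ℝ)
          ≤ ((∑ w ∈ W' \ Γ, (Γ.filter fun x => G.Adj x w).card : ℕ) : ℝ) + 2 * M := by
        exact_mod_cast hC
      have hΓαR : (Γ.card : ℝ) ≤ α := by exact_mod_cast hΓα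
      have hk0 : (0 : ℝ) ≤ (k : ℝ) + 1 := by positivity
      push_cast
      push_cast at hIH
      nlinarith [mul_nonneg hk0 (by linarith [hcardR, hΓαR] :
        (0 : ℝ) ≤ ((W' \ Γ).card : ℝ) - ((W'.card : ℝ) - α))]
  have hα0 : (0 : ℝ) < α := by exact_mod_cast hα_pos
  set k := l / α with hk
  set t : ℝ := (l : ℝ) / α with htdef
  have ht : t * α = l := div_mul_cancel₀ _ (ne_of_gt hα0)
  have hk1 : (k : ℝ) * α ≤ l := by exact_mod_cast Nat.div_mul_le_self l α
  have hk2 : (l : ℝ) < ((k : ℝ) + 1) * α := by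
    have : l < (k + 1) * α := (Nat.div_lt_iff_lt_mul hα_pos).1 (Nat.lt_succ_self k)
    exact_mod_cast this
  have hkt : (k : ℝ) ≤ t := by
    rw [← ht] at hk1
    exact le_of_mul_le_mul_right hk1 hα0
  have htk : t < (k : ℝ) + 1 := by
    rw [← ht] at hk2
    exact lt_of_mul_lt_mul_right hk2 hα0.le
  have ht0 : (0 : ℝ) ≤ t := by positivity
  have hM0 : (0 : ℝ) ≤ (M : ℝ) := by positivity
  have hkey := key k W (Finset.Subset.refl W)
  rw [hW] at hkey
  rw [← ht] at hkey ⊢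
  nlinarith [mul_nonneg (mul_nonneg hα0.le (sub_nonneg.2 hkt)) (sub_nonneg.2 htk.le),
    mul_nonneg hM0 (sub_nonneg.2 hkt), mul_nonneg hα0.le ht0]
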